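/- arXiv:2206.12184 — 2 statements merged into one kernel-verified Lean document; each statement's English description precedes it below -/
import Mathlib

section
/- As formal power series (or for |λt| small), the generating function identity Σ_{n≥0} D_{m,λ}(n,x) t^n/n! = (1+λt)^{1/λ} · exp((x/m)((1+λt)^{m/λ} − 1)) holds, where D_{m,λ}(n,x) = Σ_{k=0}^n W_{m,λ}(n,k) x^k and the degenerate Whitney numbers W_{m,λ}(n,k) are defined by (mx+1)_{n,λ} = Σ_{k=0}^n W_{m,λ}(n,k) m^k (x)_k. -/
open Finset

/-- Degenerate falling factorial `(x)_{n,λ} = x(x-λ)⋯(x-(n-1)λ)`. -/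
noncomputable def dfall (lam x : ℝ) (n : ℕ) : ℝ := ∏ i ∈ Finset.range n, (x - i * lam)

/-- Ordinary falling factorial `(x)_n = x(x-1)⋯(x-n+1)`. -/
noncomputable def ffall (x : ℝ) (n : ℕ) : ℝ := ∏ i ∈ Finset.range n, (x - i)

lemma iterDeriv_cpow (r : ℂ) (n : ℕ) :
    ∀ z : ℂ, 0 < (1 + z).re →
    iteratedDeriv n (fun u : ℂ => (1 + u) ^ r) z
      = (∏ i ∈ Finset.range n, (r - (i : ℂ))) * (1 + z) ^ (r - (n : ℂ)) := by
  induction n with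
  | zero => intro z hz; simp
  | succ n ih =>
    intro z hz
    rw [iteratedDeriv_succ]
    have hopen : IsOpen {w : ℂ | 0 < (1 + w).re} :=
      isOpen_lt continuous_const ((Complex.continuous_re).comp (by continuity))
    have hev : iteratedDeriv n (fun u : ℂ => (1 + u) ^ r)
        =ᶠ[nhds z] fun w => (∏ i ∈ Finset.range n, (r - (i : ℂ))) * (1 + w) ^ (r - (n : ℂ)) := by
      filter_upwards [hopen.mem_nhds hz] with w hw
      exact ih w hw
    rw [hev.deriv_eq]
    have h1 : HasDerivAt (fun w : ℂ => 1 + w) 1 z := by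
      simpa using (hasDerivAt_id z).const_add (1 : ℂ)
    have h2 : HasDerivAt (fun w : ℂ => (1 + w) ^ (r - (n : ℂ)))
        ((r - (n : ℂ)) * (1 + z) ^ (r - (n : ℂ) - 1) * 1) z :=
      h1.cpow_const (Or.inl hz)
    rw [deriv_const_mul _ h2.differentiableAt, h2.deriv, Finset.prod_range_succ]
    have h3 : r - ((n : ℂ) + 1) = r - (n : ℂ) - 1 := by ring
    push_cast
    rw [h3]
    ring

lemma binom_hasSum_cx (r : ℂ) {s : ℂ} (hs : ‖s‖ < 1) :
    HasSum (fun n : ℕ => (∏ i ∈ Finset.range n, (r - (i : ℂ))) * s ^ n / (n.factorial : ℂ))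
      ((1 + s) ^ r) := by
  have hre : ∀ u : ℂ, u ∈ Metric.ball (0 : ℂ) 1 → 0 < (1 + u).re := by
    intro u hu
    rw [Metric.mem_ball, dist_zero_right] at hu
    have h2 : |u.re| < 1 := lt_of_le_of_lt (Complex.abs_re_le_norm u) hu
    simp only [Complex.add_re, Complex.one_re]
    linarith [abs_lt.mp h2]
  have hdiff : DifferentiableOn ℂ (fun u : ℂ => (1 + u) ^ r) (Metric.ball 0 1) := by
    intro u hu
    have h1 : HasDerivAt (fun w : ℂ => 1 + w) 1 u := by
      simpa using (hasDerivAt_id u).const_add (1 : ℂ)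
    exact ((h1.cpow_const (Or.inl (hre u hu))).differentiableAt).differentiableWithinAt
  have H := Complex.hasSum_taylorSeries_on_ball hdiff
    (by rw [Metric.mem_ball, dist_zero_right]; exact hs)
  convert H using 2 with n
  · rfl
  rw [iterDeriv_cpow r n 0 (by simp)]
  simp only [add_zero, Complex.one_cpow, sub_zero, smul_eq_mul, mul_one]
  ring

lemma binom_hasSum_real (lam c t : ℝ) (hlam : lam ≠ 0) (h : |lam * t| < 1) :
    HasSum (fun n : ℕ => dfall lam c n * t ^ n / (n.factorial : ℝ))
      ((1 + lam * t) ^ (c / lam)) := by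
  have h1 : ‖((lam * t : ℝ) : ℂ)‖ < 1 := by rw [Complex.norm_real]; exact h
  have H := binom_hasSum_cx ((c / lam : ℝ) : ℂ) h1
  have hpos : (0 : ℝ) ≤ 1 + lam * t := by nlinarith [abs_lt.mp h]
  have hl : ((lam : ℝ) : ℂ) ≠ 0 := by exact_mod_cast hlam
  rw [← Complex.hasSum_ofReal]
  convert H using 2 with n
  · have key : (∏ i ∈ range n, ((c : ℂ) - (i : ℂ) * (lam : ℂ)))
        = (∏ x ∈ range n, ((c : ℂ) / (lam : ℂ) - (x : ℂ))) * (lam : ℂ) ^ n :=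
      calc ∏ i ∈ range n, ((c : ℂ) - (i : ℂ) * (lam : ℂ))
          = ∏ i ∈ range n, (((c : ℂ) / (lam : ℂ) - (i : ℂ)) * (lam : ℂ)) :=
            Finset.prod_congr rfl (fun i _ => by field_simp)
        _ = (∏ i ∈ range n, ((c : ℂ) / (lam : ℂ) - (i : ℂ))) * ∏ _i ∈ range n, (lam : ℂ) :=
            Finset.prod_mul_distrib
        _ = _ := by rw [Finset.prod_const, Finset.card_range]
    push_cast [dfall]
    rw [mul_pow, ← mul_assoc, ← key]
  · rw [Complex.ofReal_cpow hpos]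
    push_cast
    ring_nf

lemma ffall_nat (j i : ℕ) : ffall (j : ℝ) i = (j.choose i : ℝ) * (i.factorial : ℝ) := by
  rcases le_or_gt i j with h | h
  · have h1 : ffall (j : ℝ) i = ((j.descFactorial i : ℕ) : ℝ) := by
      rw [Nat.descFactorial_eq_prod_range, ffall]
      push_cast [Nat.cast_prod]
      refine Finset.prod_congr rfl fun r hr => ?_
      rw [Finset.mem_range] at hr
      have hrj : r ≤ j := le_trans (le_of_lt hr) h
      push_cast [Nat.cast_sub hrj]
      norm_num
    rw [h1, Nat.descFactorial_eq_factorial_mul_choose]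
    push_cast
    ring
  · rw [Nat.choose_eq_zero_of_lt h, ffall]
    rw [Finset.prod_eq_zero (Finset.mem_range.mpr h)]
    · simp
    · simp

lemma fwdDiff_cast (f : ℕ → ℤ) (k : ℕ) :
    (fwdDiff (1 : ℕ))^[k] (fun n => ((f n : ℤ) : ℝ))
      = fun n => ((((fwdDiff (1 : ℕ))^[k] f) n : ℤ) : ℝ) := by
  induction k with
  | zero => simp
  | succ k ih =>
    rw [Function.iterate_succ_apply', Function.iterate_succ_apply', ih]
    funext n
    simp [fwdDiff]

lemma whitney_c (m : ℕ) (lam : ℝ) (W : ℕ → ℕ → ℝ)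
    (hW : ∀ (y : ℝ) (N : ℕ),
      dfall lam ((m : ℝ) * y + 1) N = ∑ k ∈ Finset.range (N + 1), W N k * (m : ℝ) ^ k * ffall y k)
    (n k : ℕ) :
    ∑ j ∈ Finset.range (k + 1), (-1 : ℝ) ^ (k - j) * (k.choose j : ℝ) * dfall lam ((m : ℝ) * j + 1) n
      = if k ≤ n then W n k * (m : ℝ) ^ k * (k.factorial : ℝ) else 0 := by
  set a : ℕ → ℝ := fun j => dfall lam ((m : ℝ) * j + 1) n with ha
  have step1 : ∑ j ∈ Finset.range (k + 1), (-1 : ℝ) ^ (k - j) * (k.choose j : ℝ) * a j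
      = (fwdDiff (1 : ℕ))^[k] a 0 := by
    rw [fwdDiff_iter_eq_sum_shift]
    refine (Finset.sum_congr rfl fun j _ => ?_).symm
    simp only [zsmul_eq_mul, smul_eq_mul, zero_add, mul_one]
    push_cast
    ring
  have step2 : a = ∑ i ∈ Finset.range (n + 1),
      (W n i * (m : ℝ) ^ i * (i.factorial : ℝ)) • (fun x : ℕ => (x.choose i : ℝ)) := by
    funext j
    rw [ha]
    simp only [Finset.sum_apply, Pi.smul_apply, smul_eq_mul]
    rw [hW (j : ℝ) n]
    refine Finset.sum_congr rfl fun i _ => ?_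
    rw [ffall_nat j i]
    ring
  have step4 : ∀ i, (fwdDiff (1 : ℕ))^[k] (fun x : ℕ => (x.choose i : ℝ)) 0
      = if k = i then 1 else 0 := by
    intro i
    have hcast : (fun x : ℕ => (x.choose i : ℝ)) = fun x : ℕ => (((x.choose i : ℤ)) : ℝ) := by
      funext x; push_cast; rfl
    rw [hcast]
    have h2 := congrFun (fwdDiff_cast (fun x => (x.choose i : ℤ)) k) 0
    rw [h2, fwdDiff_iter_choose_zero]
    split <;> simp
  rw [step1, step2, fwdDiff_iter_finset_sum]
  simp only [Finset.sum_apply, Pi.smul_apply, fwdDiff_iter_const_smul, smul_eq_mul, step4]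
  rw [Finset.sum_congr rfl (fun i _ => by rw [mul_ite, mul_one, mul_zero]),
    Finset.sum_ite_eq]
  simp [Nat.lt_succ_iff]

set_option maxHeartbeats 1000000 in
theorem stmt17 (m : ℕ) (hm : 0 < m) (lam : ℝ) (hlam : lam ≠ 0) (x : ℝ)
    (W : ℕ → ℕ → ℝ)
    (hW : ∀ (y : ℝ) (N : ℕ),
      dfall lam ((m : ℝ) * y + 1) N = ∑ k ∈ Finset.range (N + 1), W N k * (m : ℝ) ^ k * ffall y k) :
    ∃ ε > (0 : ℝ), ∀ t : ℝ, |t| < ε →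
      ∑' n : ℕ, (∑ k ∈ Finset.range (n + 1), W n k * x ^ k) * t ^ n / (Nat.factorial n)
        = (1 + lam * t) ^ ((1 : ℝ) / lam) *
            Real.exp ((x / m) * ((1 + lam * t) ^ ((m : ℝ) / lam) - 1)) := by
  set L : ℝ := |lam| with hLdef
  have hL : 0 < L := abs_pos.mpr hlam
  refine ⟨1 / (2 * (1 + L)), by positivity, fun t ht => ?_⟩
  have ht0 : |t| < 1 / (2 * (1 + L)) := ht
  have hq : L * |t| < 1 / 2 := by
    have h1 : L * |t| < L * (1 / (2 * (1 + L))) := by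
      rcases eq_or_lt_of_le (abs_nonneg t) with h | h
      · rw [← h]; simp; positivity
      · exact (mul_lt_mul_iff_right₀ hL).mpr ht0
    have h2 : L * (1 / (2 * (1 + L))) < 1 / 2 := by
      rw [mul_one_div, div_lt_div_iff₀ (by positivity : (0:ℝ) < 2 * (1 + L)) (by norm_num : (0:ℝ) < 2)]
      nlinarith
    linarith
  have hq1 : |lam * t| < 1 := by rw [abs_mul]; linarith
  have hs0 : (0 : ℝ) < 1 + lam * t := by nlinarith [abs_lt.mp hq1]
  have hm0 : (m : ℝ) ≠ 0 := Nat.cast_ne_zero.mpr hm.ne'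
  set z : ℝ := x / m with hzdef
  set w : ℝ := (1 + lam * t) ^ ((m : ℝ) / lam) with hwdef
  set P : ℝ := (1 + lam * t) ^ ((1 : ℝ) / lam) with hPdef
  -- coefficients
  set c : ℕ → ℕ → ℝ := fun n k =>
    ∑ j ∈ Finset.range (k + 1), (-1 : ℝ) ^ (k - j) * (k.choose j : ℝ) * dfall lam ((m : ℝ) * j + 1) n
    with hcdef
  have hc : ∀ n k, c n k = if k ≤ n then W n k * (m : ℝ) ^ k * (k.factorial : ℝ) else 0 :=
    fun n k => whitney_c m lam W hW n k
  set f : ℕ → ℕ → ℝ := fun n k => (z ^ k / (k.factorial : ℝ)) * (c n k * t ^ n / (n.factorial : ℝ))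
    with hfdef
  -- binomial sums
  have hAj : ∀ j : ℕ, HasSum (fun n => dfall lam ((m : ℝ) * j + 1) n * t ^ n / (n.factorial : ℝ))
      ((1 + lam * t) ^ (((m : ℝ) * j + 1) / lam)) :=
    fun j => binom_hasSum_real lam ((m : ℝ) * j + 1) t hlam hq1
  have hBk : ∀ k : ℕ, HasSum (fun n => dfall (-L) ((m : ℝ) * k + 1) n * |t| ^ n / (n.factorial : ℝ))
      ((1 + (-L) * |t|) ^ (((m : ℝ) * k + 1) / (-L))) := by
    intro k
    refine binom_hasSum_real (-L) ((m : ℝ) * k + 1) (|t|) (neg_ne_zero.mpr hL.ne') ?_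
    rw [abs_mul, abs_neg, abs_abs, abs_abs]
    linarith
  -- nonnegativity of the majorant factorials
  have hdfall_nonneg : ∀ (cc : ℝ), 0 ≤ cc → ∀ n, 0 ≤ dfall (-L) cc n := by
    intro cc hcc n
    refine Finset.prod_nonneg fun i _ => ?_
    have : (0 : ℝ) ≤ (i : ℝ) * L := by positivity
    simp only [mul_neg, sub_neg_eq_add]
    linarith
  -- bound on |c n k|
  have hcbound : ∀ n k, |c n k| ≤ 2 ^ k * dfall (-L) ((m : ℝ) * k + 1) n := by
    intro n k
    have h1 : ∀ j, j ≤ k → |dfall lam ((m : ℝ) * j + 1) n| ≤ dfall (-L) ((m : ℝ) * k + 1) n := by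
      intro j hj
      rw [dfall, Finset.abs_prod, dfall]
      refine Finset.prod_le_prod (fun i _ => abs_nonneg _) fun i _ => ?_
      have hab : |((m : ℝ) * j + 1) - (i : ℝ) * lam| ≤ ((m : ℝ) * j + 1) + (i : ℝ) * L := by
        calc |((m : ℝ) * j + 1) - (i : ℝ) * lam| ≤ |(m : ℝ) * j + 1| + |(i : ℝ) * lam| :=
              abs_sub _ _
          _ = ((m : ℝ) * j + 1) + (i : ℝ) * L := by
              rw [abs_of_pos (by positivity : (0:ℝ) < (m : ℝ) * j + 1), abs_mul, Nat.abs_cast,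
                hLdef]
      have hjk : (m : ℝ) * j ≤ (m : ℝ) * k :=
        mul_le_mul_of_nonneg_left (Nat.cast_le.mpr hj) (Nat.cast_nonneg m)
      have hrw : (m : ℝ) * k + 1 - (i : ℝ) * (-L) = ((m : ℝ) * k + 1) + (i : ℝ) * L := by ring
      rw [hrw]
      have hiL : (0:ℝ) ≤ (i : ℝ) * L := by positivity
      linarith
    calc |c n k| ≤ ∑ j ∈ Finset.range (k + 1),
        |(-1 : ℝ) ^ (k - j) * (k.choose j : ℝ) * dfall lam ((m : ℝ) * j + 1) n| := by
          rw [hcdef]; exact Finset.abs_sum_le_sum_abs _ _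
      _ ≤ ∑ j ∈ Finset.range (k + 1), (k.choose j : ℝ) * dfall (-L) ((m : ℝ) * k + 1) n := by
          refine Finset.sum_le_sum fun j hj => ?_
          rw [abs_mul, abs_mul, abs_pow, abs_neg, abs_one, one_pow, one_mul,
            Nat.abs_cast]
          exact mul_le_mul_of_nonneg_left
            (h1 j (Nat.lt_succ_iff.mp (Finset.mem_range.mp hj))) (Nat.cast_nonneg _)
      _ = 2 ^ k * dfall (-L) ((m : ℝ) * k + 1) n := by
          rw [← Finset.sum_mul]
          congr 1
          rw [← Nat.cast_sum, Nat.sum_range_choose]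
          push_cast
          ring
  -- the majorant family
  set G : ℕ × ℕ → ℝ := fun p => ((2 * |z|) ^ p.1 / (p.1.factorial : ℝ)) *
    (dfall (-L) ((m : ℝ) * p.1 + 1) p.2 * |t| ^ p.2 / (p.2.factorial : ℝ)) with hGdef
  have hGnonneg : ∀ p, 0 ≤ G p := by
    intro p
    have := hdfall_nonneg ((m : ℝ) * p.1 + 1) (by positivity) p.2
    positivity
  have hGeq : ∀ k : ℕ, (fun n => G (k, n)) = fun n => ((2 * |z|) ^ k / (k.factorial : ℝ)) *
      (dfall (-L) ((m : ℝ) * k + 1) n * |t| ^ n / (n.factorial : ℝ)) := by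
    intro k
    funext n
    rw [hGdef]
  have hGrow : ∀ k, Summable fun n => G (k, n) := by
    intro k
    rw [hGeq k]
    exact ((hBk k).summable).mul_left _
  have hGrowsum : ∀ k, ∑' n, G (k, n)
      = ((2 * |z|) ^ k / (k.factorial : ℝ)) * ((1 + (-L) * |t|) ^ (((m : ℝ) * k + 1) / (-L))) := by
    intro k
    rw [tsum_congr (fun n => congrFun (hGeq k) n), tsum_mul_left, (hBk k).tsum_eq]
  have hb0 : (0 : ℝ) < 1 + (-L) * |t| := by
    have : (-L) * |t| = -(L * |t|) := by ring
    rw [this]; linarith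
  have hSk : ∀ k : ℕ, (1 + (-L) * |t|) ^ (((m : ℝ) * k + 1) / (-L))
      = (1 + (-L) * |t|) ^ ((1 : ℝ) / (-L)) * ((1 + (-L) * |t|) ^ ((m : ℝ) / (-L))) ^ k := by
    intro k
    rw [← Real.rpow_natCast ((1 + (-L) * |t|) ^ ((m : ℝ) / (-L))) k,
      ← Real.rpow_mul hb0.le, ← Real.rpow_add hb0]
    congr 1
    have hLne : (-L) ≠ 0 := neg_ne_zero.mpr hL.ne'
    field_simp
    ring
  have hGsum : Summable G := by
    rw [summable_prod_of_nonneg hGnonneg]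
    refine ⟨hGrow, ?_⟩
    refine Summable.congr ?_ (fun k => (hGrowsum k).symm)
    set C : ℝ := (1 + (-L) * |t|) ^ ((1 : ℝ) / (-L)) with hCdef
    set ρ : ℝ := (1 + (-L) * |t|) ^ ((m : ℝ) / (-L)) with hρdef
    have : ∀ k : ℕ, ((2 * |z|) ^ k / (k.factorial : ℝ))
          * ((1 + (-L) * |t|) ^ (((m : ℝ) * k + 1) / (-L)))
        = C * ((2 * |z| * ρ) ^ k / (k.factorial : ℝ)) := by
      intro k
      rw [hSk k, mul_pow]
      ring
    refine Summable.congr ?_ (fun k => (this k).symm)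
    exact (Real.summable_pow_div_factorial (2 * |z| * ρ)).mul_left C
  -- summability of f (indexed as (k, n))
  have hfbound : ∀ p : ℕ × ℕ, ‖f p.2 p.1‖ ≤ G p := by
    rintro ⟨k, n⟩
    simp only [hfdef, Real.norm_eq_abs, hGdef]
    rw [abs_mul, abs_div, abs_div, abs_mul, abs_pow, abs_pow, Nat.abs_cast, Nat.abs_cast]
    have hnn := hdfall_nonneg ((m : ℝ) * k + 1) (by positivity) n
    calc |z| ^ k / (k.factorial : ℝ) * (|c n k| * |t| ^ n / (n.factorial : ℝ))
        ≤ |z| ^ k / (k.factorial : ℝ) *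
          ((2 ^ k * dfall (-L) ((m : ℝ) * k + 1) n) * |t| ^ n / (n.factorial : ℝ)) := by
          refine mul_le_mul_of_nonneg_left ?_ (by positivity)
          refine div_le_div_of_nonneg_right ?_ (by positivity) |>.trans_eq rfl
          exact mul_le_mul_of_nonneg_right (hcbound n k) (by positivity)
      _ = (2 * |z|) ^ k / (k.factorial : ℝ) *
          (dfall (-L) ((m : ℝ) * k + 1) n * |t| ^ n / (n.factorial : ℝ)) := by
          rw [mul_pow]
          ring
  have hFsum : Summable (fun p : ℕ × ℕ => f p.2 p.1) :=
    Summable.of_norm_bounded hGsum hfbound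
  -- row identity
  have hrow : ∀ n : ℕ, (∑ k ∈ Finset.range (n + 1), W n k * x ^ k) * t ^ n / (Nat.factorial n)
      = ∑' k, f n k := by
    intro n
    rw [tsum_eq_sum (s := Finset.range (n + 1)) (fun k hk => by
      rw [hfdef]
      simp only
      rw [hc n k, if_neg (by
        intro hkn
        exact hk (Finset.mem_range.mpr (Nat.lt_succ_of_le hkn)))]
      ring)]
    rw [Finset.sum_mul, Finset.sum_div]
    refine Finset.sum_congr rfl fun k hk => ?_
    have hkn : k ≤ n := Nat.lt_succ_iff.mp (Finset.mem_range.mp hk)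
    rw [hfdef]
    simp only
    rw [hc n k, if_pos hkn]
    have hx : z ^ k * (m : ℝ) ^ k = x ^ k := by
      rw [hzdef, ← mul_pow, div_mul_cancel₀ _ hm0]
    have hkf : ((k.factorial : ℝ)) ≠ 0 := Nat.cast_ne_zero.mpr k.factorial_ne_zero
    calc W n k * x ^ k * t ^ n / (n.factorial : ℝ)
        = W n k * (z ^ k * (m : ℝ) ^ k) * t ^ n / (n.factorial : ℝ)
          * ((k.factorial : ℝ) / (k.factorial : ℝ)) := by rw [hx, div_self hkf, mul_one]
      _ = z ^ k / (k.factorial : ℝ) * (W n k * (m : ℝ) ^ k * (k.factorial : ℝ) * t ^ n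
          / (n.factorial : ℝ)) := by ring
  -- main chain
  calc ∑' n : ℕ, (∑ k ∈ Finset.range (n + 1), W n k * x ^ k) * t ^ n / (Nat.factorial n)
      = ∑' n, ∑' k, f n k := tsum_congr hrow
    _ = ∑' k, ∑' n, f n k := Summable.tsum_comm hFsum
    _ = ∑' k : ℕ, (z ^ k / (k.factorial : ℝ)) * (P * (w - 1) ^ k) := by
        refine tsum_congr fun k => ?_
        rw [hfdef]
        simp only
        rw [tsum_mul_left]
        congr 1
        have hterm : ∀ n : ℕ, c n k * t ^ n / (n.factorial : ℝ)
            = ∑ j ∈ Finset.range (k + 1), (-1 : ℝ) ^ (k - j) * (k.choose j : ℝ) *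
                (dfall lam ((m : ℝ) * j + 1) n * t ^ n / (n.factorial : ℝ)) := by
          intro n
          rw [hcdef]
          simp only
          rw [Finset.sum_mul, Finset.sum_div]
          exact Finset.sum_congr rfl fun j _ => by ring
        rw [tsum_congr hterm, Summable.tsum_finsetSum (fun j _ => ((hAj j).summable).mul_left _)]
        have hAval : ∀ j : ℕ, (1 + lam * t) ^ (((m : ℝ) * j + 1) / lam) = P * w ^ j := by
          intro j
          have hexp : ((m : ℝ) * j + 1) / lam = (1 : ℝ) / lam + ((m : ℝ) / lam) * j := by
            field_simp
            ring
          rw [hexp, Real.rpow_add hs0, hPdef, hwdef]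
          congr 1
          rw [← Real.rpow_natCast ((1 + lam * t) ^ ((m : ℝ) / lam)) j,
            ← Real.rpow_mul hs0.le]
        calc ∑ j ∈ Finset.range (k + 1), ∑' n, (-1 : ℝ) ^ (k - j) * (k.choose j : ℝ) *
              (dfall lam ((m : ℝ) * j + 1) n * t ^ n / (n.factorial : ℝ))
            = ∑ j ∈ Finset.range (k + 1), (-1 : ℝ) ^ (k - j) * (k.choose j : ℝ) *
              ((1 + lam * t) ^ (((m : ℝ) * j + 1) / lam)) := by
              refine Finset.sum_congr rfl fun j _ => ?_
              rw [tsum_mul_left, (hAj j).tsum_eq]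
          _ = P * ∑ j ∈ Finset.range (k + 1), w ^ j * (-1 : ℝ) ^ (k - j) * (k.choose j : ℝ) := by
              rw [Finset.mul_sum]
              refine Finset.sum_congr rfl fun j _ => ?_
              rw [hAval j]
              ring
          _ = P * (w - 1) ^ k := by
              rw [show w - 1 = w + (-1) by ring, add_pow]
    _ = (1 + lam * t) ^ ((1 : ℝ) / lam) *
            Real.exp ((x / m) * ((1 + lam * t) ^ ((m : ℝ) / lam) - 1)) := by
        have hterm : ∀ k : ℕ, (z ^ k / (k.factorial : ℝ)) * (P * (w - 1) ^ k)
            = P * ((z * (w - 1)) ^ k / (k.factorial : ℝ)) := by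
          intro k
          rw [mul_pow]
          ring
        rw [tsum_congr hterm, tsum_mul_left]
        congr 1
        rw [Real.exp_eq_exp_ℝ, NormedSpace.exp_eq_tsum_div]
end

section
/- For k ≥ 0, the degenerate Whitney numbers of the second kind have exponential generating function e_λ(t) · (1/k!) ((e_λ^m(t)−1)/m)^k = Σ_{n≥k} W_{m,λ}(n,k) t^n/n!, as formal power series in t. -/
open Finset

lemma dfall_zero (lam a : ℝ) : dfall lam a 0 = 1 := by simp [dfall]

lemma dfall_succ (lam a : ℝ) (n : ℕ) : dfall lam a (n+1) = dfall lam a n * (a - n * lam) := by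
  simp [dfall, Finset.prod_range_succ]

lemma ffall_succ (a : ℝ) (n : ℕ) : ffall a (n+1) = ffall a n * (a - n) := by
  simp [ffall, Finset.prod_range_succ]

lemma ffall_nat_zero (j l : ℕ) (h : j < l) : ffall (j : ℝ) l = 0 := by
  apply Finset.prod_eq_zero (Finset.mem_range.2 h)
  simp

lemma ffall_nat_self (j : ℕ) : ffall (j : ℝ) j = j.factorial := by
  induction j with
  | zero => simp [ffall]
  | succ n ih =>
    rw [ffall, Finset.prod_range_succ']
    push_cast
    have : (∏ i ∈ Finset.range n, ((n:ℝ) + 1 - (i + 1))) = ffall (n:ℝ) n := by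
      unfold ffall; apply Finset.prod_congr rfl; intro i _; ring
    rw [this, ih]
    push_cast [Nat.factorial_succ]
    ring

lemma abs_dfall_le (lam a : ℝ) (n : ℕ) :
    |dfall lam a n| ≤ (|a| + |lam| + 1) ^ n * n.factorial := by
  induction n with
  | zero => simp [dfall_zero]
  | succ n ih =>
    rw [dfall_succ, abs_mul]
    have h1 : |a - n * lam| ≤ (|a| + |lam| + 1) * (n + 1) := by
      calc |a - n * lam| ≤ |a| + (n:ℝ) * |lam| := by
            refine (abs_sub _ _).trans ?_
            simp [abs_mul, abs_of_nonneg (show (0:ℝ) ≤ (n:ℝ) by positivity)]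
        _ ≤ (|a| + |lam| + 1) * (n + 1) := by nlinarith [abs_nonneg a, abs_nonneg lam, (show (0:ℝ) ≤ (n:ℝ) by positivity)]
    calc |dfall lam a n| * |a - n * lam|
        ≤ ((|a| + |lam| + 1) ^ n * n.factorial) * ((|a| + |lam| + 1) * (n + 1)) := by
          apply mul_le_mul ih h1 (abs_nonneg _) (by positivity)
      _ = (|a| + |lam| + 1) ^ (n+1) * (n+1).factorial := by
          push_cast [Nat.factorial_succ, pow_succ]; ring

lemma binom_series (lam a : ℝ) (hlam : lam ≠ 0) :
    ∃ r > 0, (∀ t : ℝ, |t| < r → 0 < 1 + lam * t) ∧ ∀ t : ℝ, |t| < r →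
      HasSum (fun n => dfall lam a n / n.factorial * t ^ n) ((1 + lam * t) ^ (a / lam)) := by
  set B : ℝ := |a| + |lam| + 1 with hBdef
  have hB1 : 1 ≤ B := by rw [hBdef]; nlinarith [abs_nonneg a, abs_nonneg lam]
  have hB0 : 0 < B := by positivity
  set r : ℝ := 1 / (2 * B) with hrdef
  have hr0 : 0 < r := by positivity
  have hBr : B * r = 1 / 2 := by rw [hrdef]; field_simp
  set e : ℕ → ℝ := fun n => dfall lam a n / n.factorial with hedef
  have he : ∀ n, |e n| ≤ B ^ n := by
    intro n
    rw [hedef]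
    have hf : (0:ℝ) < n.factorial := by exact_mod_cast n.factorial_pos
    rw [abs_div, abs_of_pos hf, div_le_iff₀ hf]
    exact abs_dfall_le lam a n
  have he_succ : ∀ n : ℕ, e (n+1) * (n+1) = (a - n * lam) * e n := by
    intro n
    rw [hedef]
    simp only
    rw [dfall_succ, Nat.factorial_succ]
    have h1 : ((n+1).factorial : ℝ) ≠ 0 := by positivity
    have h2 : (n.factorial : ℝ) ≠ 0 := by positivity
    push_cast
    field_simp
  have hpos : ∀ y : ℝ, |y| < r → 0 < 1 + lam * y := by
    intro y hy
    have : |lam * y| < 1 / 2 := by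
      rw [abs_mul]
      calc |lam| * |y| ≤ B * |y| := by
            apply mul_le_mul_of_nonneg_right _ (abs_nonneg y)
            rw [hBdef]; nlinarith [abs_nonneg a]
        _ < B * r := by exact mul_lt_mul_of_pos_left hy hB0
        _ = 1 / 2 := hBr
    have := abs_lt.1 this
    linarith
  -- pointwise bound
  have hbound : ∀ y : ℝ, |y| < r → ∀ n, |e n * y ^ n| ≤ (1/2) ^ n := by
    intro y hy n
    rw [abs_mul, abs_pow]
    calc |e n| * |y| ^ n ≤ B ^ n * r ^ n := by
          apply mul_le_mul (he n) (pow_le_pow_left₀ (abs_nonneg y) hy.le n) (by positivity) (by positivity)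
      _ = (B * r) ^ n := (mul_pow _ _ _).symm
      _ = (1/2) ^ n := by rw [hBr]
  have hhalf : Summable (fun n : ℕ => ((1:ℝ)/2) ^ n) :=
    summable_geometric_of_lt_one (by norm_num) (by norm_num)
  -- summable bound for derivatives
  set u : ℕ → ℝ := fun n => (n : ℝ) * (B * (1/2) ^ (n - 1)) with hudef
  have hu : Summable u := by
    have h1 : Summable (fun n : ℕ => (n:ℝ) * (1/2) ^ n) := by
      simpa using summable_pow_mul_geometric_of_norm_lt_one (R := ℝ) 1 (r := 1/2) (by norm_num)
    have h2 : Summable (fun n : ℕ => (2 * B) * ((n:ℝ) * (1/2) ^ n)) := h1.mul_left _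
    refine Summable.of_nonneg_of_le (fun n => ?_) (fun n => ?_) h2
    · rw [hudef]; positivity
    rw [hudef]
    match n with
    | 0 => simp
    | (s+1) =>
      simp only [Nat.add_sub_cancel]
      have : ((1:ℝ)/2) ^ s = 2 * (1/2)^(s+1) := by ring
      rw [this]; ring_nf; rfl
  set g : ℕ → ℝ → ℝ := fun n y => e n * y ^ n with hgdef
  set g' : ℕ → ℝ → ℝ := fun n y => e n * ((n:ℝ) * y ^ (n - 1)) with hg'def
  have hgder : ∀ n (z : ℝ), HasDerivAt (g n) (g' n z) z := by
    intro n z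
    exact (hasDerivAt_pow n z).const_mul (e n)
  have hg'bound : ∀ n (z : ℝ), z ∈ Metric.ball (0:ℝ) r → ‖g' n z‖ ≤ u n := by
    intro n z hz
    rw [mem_ball_zero_iff, Real.norm_eq_abs] at hz
    rw [hg'def, hudef]
    simp only [Real.norm_eq_abs]
    match n with
    | 0 => simp
    | (s+1) =>
      simp only [Nat.add_sub_cancel]
      rw [abs_mul, abs_mul, abs_pow]
      push_cast
      have h1 : |e (s+1)| ≤ B ^ (s+1) := he _
      have h2 : |z| ^ s ≤ r ^ s := pow_le_pow_left₀ (abs_nonneg z) hz.le s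
      have : B ^ (s+1) * r ^ s = B * (1/2) ^ s := by
        rw [pow_succ]
        calc B ^ s * B * r ^ s = B * (B * r) ^ s := by rw [mul_pow]; ring
          _ = B * (1/2) ^ s := by rw [hBr]
      calc |e (s+1)| * (|(s:ℝ)+1| * |z| ^ s) ≤ B ^ (s+1) * ((s+1) * r ^ s) := by
            apply mul_le_mul h1 _ (by positivity) (by positivity)
            apply mul_le_mul _ h2 (by positivity) (by positivity)
            rw [abs_of_nonneg (by positivity)]
        _ = ((s:ℝ)+1) * (B * (1/2) ^ s) := by linear_combination ((s:ℝ)+1) * this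
  have hg0 : Summable (fun n => g n 0) := by
    apply summable_of_ne_finset_zero (s := {0})
    intro n hn
    simp only [Finset.mem_singleton] at hn
    simp [hgdef, zero_pow hn]
  set f : ℝ → ℝ := fun y => ∑' n, g n y with hfdef
  have hder : ∀ y ∈ Metric.ball (0:ℝ) r, HasDerivAt f (∑' n, g' n y) y := by
    intro y hy
    exact hasDerivAt_tsum_of_isPreconnected hu Metric.isOpen_ball
      (convex_ball (0:ℝ) r).isPreconnected (fun n z _ => hgder n z) hg'bound
      (by simpa [Metric.mem_ball] using hr0) hg0 hy
  -- summabilities at a point y with |y| < r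
  have Sg : ∀ y : ℝ, |y| < r → Summable (fun n => e n * y ^ n) := by
    intro y hy
    exact Summable.of_norm_bounded hhalf (fun n => hbound y hy n)
  have Sg' : ∀ y : ℝ, |y| < r → Summable (fun n => g' n y) := by
    intro y hy
    apply Summable.of_norm_bounded hu
    intro n
    exact hg'bound n y (by rwa [mem_ball_zero_iff, Real.norm_eq_abs])
  have Sshift : ∀ y : ℝ, |y| < r → Summable (fun n : ℕ => (a - n * lam) * (e n * y ^ n)) := by
    intro y hy
    apply Summable.of_norm_bounded (hu.add (hhalf.mul_left (|a|)))
    intro n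
    simp only [Real.norm_eq_abs]
    rw [abs_mul]
    calc |a - n * lam| * |e n * y ^ n| ≤ (|a| + n * |lam|) * |e n * y ^ n| := by
          apply mul_le_mul_of_nonneg_right _ (abs_nonneg _)
          refine (abs_sub _ _).trans ?_
          simp [abs_mul, abs_of_nonneg (show (0:ℝ) ≤ (n:ℝ) by positivity)]
      _ ≤ |a| * (1/2)^n + n * |lam| * (1/2)^n := by
          rw [add_mul]
          apply add_le_add <;>
            exact mul_le_mul_of_nonneg_left (hbound y hy n) (by positivity)
      _ ≤ u n + |a| * (1/2)^n := by
          rw [hudef]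
          have h0 : (0:ℝ) ≤ (1/2:ℝ)^n := by positivity
          have hlB : |lam| ≤ B := by rw [hBdef]; nlinarith [abs_nonneg a]
          have hhh : ((1:ℝ)/2)^n ≤ (1/2)^(n-1) := by
            exact pow_le_pow_of_le_one (by norm_num) (by norm_num) (Nat.sub_le n 1)
          have : (n:ℝ) * |lam| * (1/2)^n ≤ (n:ℝ) * (B * (1/2)^(n-1)) := by
            calc (n:ℝ) * |lam| * (1/2)^n ≤ (n:ℝ) * B * (1/2)^(n-1) := by
                  apply mul_le_mul _ hhh h0 (by positivity)
                  exact mul_le_mul_of_nonneg_left hlB (by positivity)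
              _ = (n:ℝ) * (B * (1/2)^(n-1)) := by ring
          linarith
  have Squad : ∀ y : ℝ, |y| < r → Summable (fun n : ℕ => (n:ℝ) * lam * (e n * y ^ n)) := by
    intro y hy
    apply Summable.of_norm_bounded (hu.add hu)
    intro n
    simp only [Real.norm_eq_abs]
    rw [abs_mul, abs_mul]
    have hlB : |lam| ≤ B := by rw [hBdef]; nlinarith [abs_nonneg a]
    have h1 : |(n:ℝ)| * |lam| * |e n * y ^ n| ≤ (n:ℝ) * B * (1/2)^n := by
      rw [abs_of_nonneg (show (0:ℝ) ≤ (n:ℝ) by positivity)]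
      exact mul_le_mul (mul_le_mul_of_nonneg_left hlB (Nat.cast_nonneg n))
        (hbound y hy n) (abs_nonneg _) (by positivity)
    calc |(n:ℝ)| * |lam| * |e n * y ^ n| ≤ (n:ℝ) * B * (1/2)^n := h1
      _ ≤ u n := by
          rw [hudef]
          have hhh : ((1:ℝ)/2)^n ≤ (1/2)^(n-1) := by
            exact pow_le_pow_of_le_one (by norm_num) (by norm_num) (Nat.sub_le n 1)
          have := mul_le_mul_of_nonneg_left hhh (show (0:ℝ) ≤ (n:ℝ)*B by positivity)
          nlinarith
      _ ≤ u n + u n := by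
          have : 0 ≤ u n := by rw [hudef]; positivity
          linarith
  -- shift identity for the derivative series
  have hshift : ∀ y : ℝ, |y| < r → (∑' n, g' n y) = ∑' n : ℕ, (a - n * lam) * (e n * y ^ n) := by
    intro y hy
    rw [Summable.tsum_eq_zero_add (Sg' y hy)]
    have h0 : g' 0 y = 0 := by simp [hg'def]
    rw [h0, zero_add]
    apply tsum_congr
    intro n
    have : g' (n+1) y = (e (n+1) * ((n:ℝ)+1)) * y ^ n := by
      simp only [hg'def, Nat.add_sub_cancel]
      push_cast
      ring
    rw [this, he_succ n]
    push_cast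
    ring
  -- the ODE
  have hode : ∀ y : ℝ, |y| < r → (1 + lam * y) * (∑' n, g' n y) = a * f y := by
    intro y hy
    rw [hshift y hy]
    have hq : ∀ n : ℕ, (n:ℝ) * lam * (e n * y ^ n) =
        (fun n : ℕ => (n:ℝ) * lam * (e n * y ^ n)) n := fun n => rfl
    -- λ * y * ∑' (a - nλ) e_n y^n = ∑' n λ e_n y^n
    have key : lam * y * (∑' n : ℕ, (a - n * lam) * (e n * y ^ n))
        = ∑' n : ℕ, (n:ℝ) * lam * (e n * y ^ n) := by
      rw [← tsum_mul_left]
      rw [Summable.tsum_eq_zero_add (Squad y hy)]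
      simp only [Nat.cast_zero, zero_mul, zero_add, Nat.cast_add, Nat.cast_one]
      apply tsum_congr
      intro n
      have h1 : ((n:ℝ) + 1) * lam * (e (n+1) * y ^ (n+1)) =
          (e (n+1) * ((n:ℝ)+1)) * (lam * y ^ (n+1)) := by ring
      rw [h1, he_succ n]
      ring
    have hsum2 : a * f y = ∑' n : ℕ, a * (e n * y ^ n) := by
      rw [hfdef]; exact (tsum_mul_left).symm
    rw [add_mul, one_mul, key, hsum2]
    rw [← Summable.tsum_add (Sshift y hy) (Squad y hy)]
    apply tsum_congr
    intro n
    ring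
  -- F y = f y * (1 + lam y)^(-(a/lam)) has zero derivative on the ball
  set p : ℝ := -(a / lam) with hpdef
  set F : ℝ → ℝ := fun y => f y * (1 + lam * y) ^ p with hFdef
  have hFder : ∀ y ∈ Metric.ball (0:ℝ) r, HasDerivAt F 0 y := by
    intro y hy
    have hy' : |y| < r := by rwa [mem_ball_zero_iff, Real.norm_eq_abs] at hy
    have hP : 0 < 1 + lam * y := hpos y hy'
    have hinner : HasDerivAt (fun z : ℝ => 1 + lam * z) lam y := by
      simpa using ((hasDerivAt_id y).const_mul lam).const_add 1
    have houter := (Real.hasDerivAt_rpow_const (x := 1 + lam * y) (p := p) (Or.inl hP.ne'))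
    have hrpow : HasDerivAt (fun z : ℝ => (1 + lam * z) ^ p)
        ((p * (1 + lam * y) ^ (p - 1)) * lam) y := by have h := houter.comp y hinner; exact h
    have hprod := (hder y hy).mul hrpow
    have hzero : (∑' n, g' n y) * (1 + lam * y) ^ p
        + f y * (p * (1 + lam * y) ^ (p - 1) * lam) = 0 := by
      have hplam : p * lam = -a := by rw [hpdef]; field_simp
      have hsplit : (1 + lam * y) ^ p = (1 + lam * y) ^ (p - 1) * (1 + lam * y) := by
        rw [← Real.rpow_add_one hP.ne' (p - 1)]
        ring_nf
      rw [hsplit]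
      have : (∑' n, g' n y) * ((1 + lam * y) ^ (p - 1) * (1 + lam * y))
          + f y * (p * (1 + lam * y) ^ (p - 1) * lam)
          = (1 + lam * y) ^ (p - 1) * ((1 + lam * y) * (∑' n, g' n y) - a * f y) := by
        rw [show p * (1 + lam*y)^(p-1) * lam = (p * lam) * (1+lam*y)^(p-1) by ring, hplam]
        ring
      rw [this, hode y hy', sub_self, mul_zero]
    rwa [hzero] at hprod
  -- F is constant on the ball
  have hconst : ∀ t : ℝ, |t| < r → F t = F 0 := by
    intro t ht
    have h0mem : (0:ℝ) ∈ Metric.ball (0:ℝ) r := by simpa [Metric.mem_ball] using hr0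
    have htmem : t ∈ Metric.ball (0:ℝ) r := by
      rwa [mem_ball_zero_iff, Real.norm_eq_abs]
    have := Convex.norm_image_sub_le_of_norm_hasDerivWithin_le
      (f := F) (f' := fun _ => 0) (s := Metric.ball (0:ℝ) r) (C := 0)
      (fun x hx => (hFder x hx).hasDerivWithinAt) (fun x _ => by simp)
      (convex_ball _ _) h0mem htmem
    simp only [zero_mul, norm_le_zero_iff, sub_eq_zero] at this
    exact this
  have hF0 : F 0 = 1 := by
    rw [hFdef]
    simp only
    have hf0 : f 0 = 1 := by
      rw [hfdef]
      simp only
      rw [tsum_eq_single 0 (fun n hn => by simp [hgdef, zero_pow hn])]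
      simp [hgdef, hedef, dfall_zero]
    rw [hf0]
    simp
  refine ⟨r, hr0, hpos, ?_⟩
  intro t ht
  have hsum := Sg t ht
  have hft : f t = (1 + lam * t) ^ (a / lam) := by
    have h1 := hconst t ht
    rw [hF0, hFdef] at h1
    simp only at h1
    have hP : 0 < 1 + lam * t := hpos t ht
    have h2 : (1 + lam * t) ^ p * (1 + lam * t) ^ (a/lam) = 1 := by
      rw [← Real.rpow_add hP, hpdef]
      simp
    calc f t = f t * ((1 + lam * t) ^ p * (1 + lam * t) ^ (a/lam)) := by rw [h2, mul_one]
      _ = (f t * (1 + lam * t) ^ p) * (1 + lam * t) ^ (a/lam) := by ring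
      _ = 1 * (1 + lam * t) ^ (a/lam) := by rw [h1]
      _ = (1 + lam * t) ^ (a/lam) := one_mul _
  have : HasSum (fun n => e n * t ^ n) (f t) := hsum.hasSum
  rw [hft] at this
  exact this

lemma ffall_nat_desc (p j : ℕ) : ffall (p:ℝ) j = (p.descFactorial j : ℝ) := by
  induction j with
  | zero => simp [ffall]
  | succ n ih =>
    rw [ffall_succ, ih, Nat.descFactorial_succ]
    rcases lt_or_ge n p with h | h
    · push_cast [Nat.cast_sub h.le]
      ring
    · rcases eq_or_lt_of_le h with rfl | h2
      · simp
      · rw [Nat.descFactorial_eq_zero_iff_lt.2 h2]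
        push_cast
        simp

lemma one_add_pow (x : ℝ) (p : ℕ) :
    (1 + x) ^ p = ∑ j ∈ Finset.range (p+1), ffall (p:ℝ) j * (x ^ j / j.factorial) := by
  rw [add_comm, (Commute.one_right x).add_pow]
  apply Finset.sum_congr rfl
  intro j hj
  rw [ffall_nat_desc, Nat.descFactorial_eq_factorial_mul_choose]
  have : (j.factorial : ℝ) ≠ 0 := by positivity
  push_cast
  field_simp
  ring

lemma hWtrunc (m : ℕ) (lam : ℝ) (W : ℕ → ℕ → ℝ)
    (hW : ∀ (y : ℝ) (N : ℕ), dfall lam ((m : ℝ) * y + 1) N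
      = ∑ j ∈ Finset.range (N + 1), W N j * (m : ℝ) ^ j * ffall y j)
    (p N : ℕ) :
    dfall lam ((m*p+1 : ℕ):ℝ) N
      = ∑ j ∈ Finset.range (p+1), (if j ≤ N then W N j else 0) * (m:ℝ)^j * ffall (p:ℝ) j := by
  have h0 := hW (p:ℝ) N
  have hcast : ((m*p+1 : ℕ):ℝ) = (m:ℝ) * (p:ℝ) + 1 := by push_cast; ring
  rw [hcast, h0]
  have e1 : ∑ j ∈ Finset.range (N+1), W N j * (m:ℝ)^j * ffall (p:ℝ) j
      = ∑ j ∈ Finset.range (max N p + 1), (if j ≤ N then W N j else 0) * (m:ℝ)^j * ffall (p:ℝ) j := by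
    have hcg : ∀ j ∈ Finset.range (N+1), W N j * (m:ℝ)^j * ffall (p:ℝ) j
        = (if j ≤ N then W N j else 0) * (m:ℝ)^j * ffall (p:ℝ) j := by
      intro j hj
      rw [Finset.mem_range] at hj
      rw [if_pos (by omega)]
    rw [Finset.sum_congr rfl hcg]
    apply Finset.sum_subset (Finset.range_subset_range.2 (by omega))
    intro j _ hj
    rw [Finset.mem_range, not_lt] at hj
    rw [if_neg (by omega), zero_mul, zero_mul]
  have e2 : ∑ j ∈ Finset.range (p+1), (if j ≤ N then W N j else 0) * (m:ℝ)^j * ffall (p:ℝ) j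
      = ∑ j ∈ Finset.range (max N p + 1), (if j ≤ N then W N j else 0) * (m:ℝ)^j * ffall (p:ℝ) j := by
    apply Finset.sum_subset (Finset.range_subset_range.2 (by omega))
    intro j _ hj
    rw [Finset.mem_range, not_lt] at hj
    rw [ffall_nat_zero p j (by omega), mul_zero]
  rw [e1, ← e2]

lemma Wbnd (m : ℕ) (hm : 0 < m) (lam : ℝ) (W : ℕ → ℕ → ℝ)
    (hW : ∀ (y : ℝ) (N : ℕ), dfall lam ((m : ℝ) * y + 1) N
      = ∑ j ∈ Finset.range (N + 1), W N j * (m : ℝ) ^ j * ffall y j) (K : ℕ) :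
    ∃ C : ℝ, 1 ≤ C ∧ ∀ j, j ≤ K → ∀ N, j ≤ N → |W N j| ≤ C ^ (N+1) * N.factorial := by
  have hsolve : ∀ j N, j ≤ N → W N j * (m:ℝ)^j * (j.factorial:ℝ)
      = dfall lam ((m*j+1:ℕ):ℝ) N - ∑ l ∈ Finset.range j, W N l * (m:ℝ)^l * ffall (j:ℝ) l := by
    intro j N hjN
    have h := hWtrunc m lam W hW j N
    rw [Finset.sum_range_succ, if_pos hjN, ffall_nat_self] at h
    have hcg : ∀ l ∈ Finset.range j, (if l ≤ N then W N l else 0) * (m:ℝ)^l * ffall (j:ℝ) l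
        = W N l * (m:ℝ)^l * ffall (j:ℝ) l := by
      intro l hl
      rw [Finset.mem_range] at hl
      rw [if_pos (by omega)]
    rw [Finset.sum_congr rfl hcg] at h
    linarith [h]
  induction K with
  | zero =>
    refine ⟨|lam| + 2, by linarith [abs_nonneg lam], ?_⟩
    intro j hj N hN
    interval_cases j
    have h := hsolve 0 N (Nat.zero_le N)
    simp only [Finset.range_zero, Finset.sum_empty, sub_zero, pow_zero, mul_one,
      Nat.factorial_zero, Nat.cast_one] at h
    rw [h]
    calc |dfall lam ((m*0+1:ℕ):ℝ) N| ≤ (|((m*0+1:ℕ):ℝ)| + |lam| + 1) ^ N * N.factorial :=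
          abs_dfall_le _ _ _
      _ ≤ (|lam| + 2) ^ (N+1) * N.factorial := by
          have h1 : |((m*0+1:ℕ):ℝ)| = 1 := by norm_num
          rw [h1]
          have h2 : (1 + |lam| + 1 : ℝ) = |lam| + 2 := by ring
          rw [h2]
          have h3 : (|lam| + 2 : ℝ) ^ N ≤ (|lam| + 2) ^ (N+1) := by
            apply pow_le_pow_right₀ (by linarith [abs_nonneg lam]) (by omega)
          have h4 : (0:ℝ) ≤ N.factorial := by positivity
          exact mul_le_mul_of_nonneg_right h3 h4
  | succ K ih =>
    obtain ⟨C, hC1, hCb⟩ := ih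
    have hC0 : (0:ℝ) < C := by linarith
    set a : ℝ := ((m*(K+1)+1:ℕ):ℝ) with hadef
    have ha0 : 0 ≤ a := by rw [hadef]; positivity
    set D : ℝ := a + |lam| + 1 with hDdef
    have hD1 : 1 ≤ D := by rw [hDdef]; nlinarith [abs_nonneg lam]
    set Sc : ℝ := ∑ l ∈ Finset.range (K+1), (m:ℝ)^l * |ffall ((K+1:ℕ):ℝ) l| with hSdef
    have hS0 : 0 ≤ Sc := by
      rw [hSdef]
      apply Finset.sum_nonneg
      intro l _
      positivity
    have hCD : (1:ℝ) ≤ C * D := by nlinarith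
    have hCD0 : (0:ℝ) ≤ C * D := by linarith
    have hSCD : (0:ℝ) ≤ Sc * (C * D) := mul_nonneg hS0 hCD0
    refine ⟨(1 + Sc) * (C * D), by nlinarith, ?_⟩
    intro j hj N hjN
    have h5 : C ≤ C * D := by nlinarith
    have hCC' : C ≤ (1 + Sc) * (C * D) := by nlinarith
    rcases Nat.lt_or_ge j (K+1) with hcase | hcase
    · calc |W N j| ≤ C ^ (N+1) * N.factorial := hCb j (by omega) N hjN
        _ ≤ ((1 + Sc) * (C * D)) ^ (N+1) * N.factorial := by
            apply mul_le_mul_of_nonneg_right _ (by positivity)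
            exact pow_le_pow_left₀ hC0.le hCC' (N+1)
    · have hjeq : j = K + 1 := by omega
      subst hjeq
      have h := hsolve (K+1) N hjN
      have hm1 : (1:ℝ) ≤ (m:ℝ) := by exact_mod_cast hm
      have hfac1 : (1:ℝ) ≤ (m:ℝ)^(K+1) * (((K+1).factorial : ℕ) : ℝ) := by
        have h1 : (1:ℝ) ≤ (m:ℝ)^(K+1) := one_le_pow₀ hm1
        have h2 : (1:ℝ) ≤ (((K+1).factorial : ℕ) : ℝ) := by
          exact_mod_cast Nat.one_le_iff_ne_zero.2 (Nat.factorial_ne_zero _)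
        nlinarith
      have habs : |W N (K+1)| ≤ |dfall lam a N| + Sc * (C^(N+1) * N.factorial) := by
        have e0 : |W N (K+1)| ≤ |W N (K+1) * (m:ℝ)^(K+1) * (((K+1).factorial : ℕ):ℝ)| := by
          rw [abs_mul, abs_mul]
          rw [abs_of_nonneg (show (0:ℝ) ≤ (m:ℝ)^(K+1) by positivity),
              abs_of_nonneg (show (0:ℝ) ≤ (((K+1).factorial : ℕ):ℝ) by positivity)]
          have := mul_le_mul_of_nonneg_left hfac1 (abs_nonneg (W N (K+1)))
          nlinarith [abs_nonneg (W N (K+1))]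
        rw [h] at e0
        refine e0.trans ((abs_sub _ _).trans ?_)
        apply add_le_add le_rfl
        rw [hSdef, Finset.sum_mul]
        refine (Finset.abs_sum_le_sum_abs _ _).trans ?_
        apply Finset.sum_le_sum
        intro l hl
        rw [Finset.mem_range] at hl
        rw [abs_mul, abs_mul]
        rw [abs_of_nonneg (show (0:ℝ) ≤ (m:ℝ)^l by positivity)]
        have hWl : |W N l| ≤ C^(N+1) * N.factorial := hCb l (by omega) N (by omega)
        calc |W N l| * (m:ℝ)^l * |ffall ((K+1:ℕ):ℝ) l|
            = ((m:ℝ)^l * |ffall ((K+1:ℕ):ℝ) l|) * |W N l| := by ring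
          _ ≤ ((m:ℝ)^l * |ffall ((K+1:ℕ):ℝ) l|) * (C^(N+1) * N.factorial) := by
              apply mul_le_mul_of_nonneg_left hWl (by positivity)
      have hDN : |dfall lam a N| ≤ D^N * N.factorial := by
        have h1 := abs_dfall_le lam a N
        rw [abs_of_nonneg ha0] at h1
        rwa [← hDdef] at h1
      have e1 : D^N ≤ (C*D)^(N+1) := by
        calc D^N ≤ D^(N+1) := pow_le_pow_right₀ hD1 (by omega)
          _ ≤ (C*D)^(N+1) := pow_le_pow_left₀ (by positivity) (by nlinarith) _
      have e2 : C^(N+1) ≤ (C*D)^(N+1) := pow_le_pow_left₀ hC0.le (by nlinarith) _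
      have e3 : (1 + Sc) * (C*D)^(N+1) ≤ ((1+Sc)*(C*D))^(N+1) := by
        rw [mul_pow (1+Sc) (C*D)]
        apply mul_le_mul_of_nonneg_right (le_self_pow₀ (by linarith) (by omega))
        positivity
      have hNf : (0:ℝ) ≤ (N.factorial : ℝ) := by positivity
      have chain : D^N + Sc * C^(N+1) ≤ ((1+Sc)*(C*D))^(N+1) := by
        have h6 := mul_le_mul_of_nonneg_left e2 hS0
        calc D^N + Sc * C^(N+1) ≤ (C*D)^(N+1) + Sc * (C*D)^(N+1) := by linarith
          _ = (1 + Sc) * (C*D)^(N+1) := by ring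
          _ ≤ ((1+Sc)*(C*D))^(N+1) := e3
      calc |W N (K+1)| ≤ |dfall lam a N| + Sc * (C^(N+1) * N.factorial) := habs
        _ ≤ D^N * N.factorial + Sc * (C^(N+1) * N.factorial) := by linarith [hDN]
        _ = (D^N + Sc * C^(N+1)) * N.factorial := by ring
        _ ≤ ((1+Sc)*(C*D))^(N+1) * N.factorial := mul_le_mul_of_nonneg_right chain hNf


theorem stmt18 (m : ℕ) (hm : 0 < m) (lam : ℝ) (hlam : lam ≠ 0) (k : ℕ)
    (W : ℕ → ℕ → ℝ)
    (hW : ∀ (y : ℝ) (N : ℕ),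
      dfall lam ((m : ℝ) * y + 1) N = ∑ j ∈ Finset.range (N + 1), W N j * (m : ℝ) ^ j * ffall y j) :
    ∃ ε > (0 : ℝ), ∀ t : ℝ, |t| < ε →
      (1 + lam * t) ^ ((1 : ℝ) / lam) *
          ((1 / (Nat.factorial k : ℝ)) * (((1 + lam * t) ^ ((m : ℝ) / lam) - 1) / m) ^ k)
        = ∑' n : ℕ, W (k + n) k * t ^ (k + n) / (Nat.factorial (k + n)) := by
  obtain ⟨C, hC1, hCb⟩ := Wbnd m hm lam W hW k
  have hC0 : (0:ℝ) < C := by linarith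
  have hm' : (m:ℝ) ≠ 0 := Nat.cast_ne_zero.2 hm.ne'
  have hbs : ∀ p : ℕ, ∃ r > 0, (∀ s : ℝ, |s| < r → 0 < 1 + lam * s) ∧ ∀ s : ℝ, |s| < r →
      HasSum (fun n => dfall lam ((m*p+1 : ℕ):ℝ) n / n.factorial * s ^ n)
        ((1 + lam * s) ^ (((m*p+1:ℕ):ℝ) / lam)) := fun p => binom_series lam _ hlam
  choose R hR0 hR using hbs
  have hne : (Finset.range (k+1)).Nonempty := ⟨0, by simp⟩
  refine ⟨min (1 / (2*C)) ((Finset.range (k+1)).inf' hne R), ?_, ?_⟩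
  · apply lt_min (by positivity)
    rw [Finset.lt_inf'_iff]
    intro p _
    exact hR0 p
  intro t ht
  have htC : C * |t| ≤ 1/2 := by
    have h1 : |t| < 1/(2*C) := lt_of_lt_of_le ht (min_le_left _ _)
    rw [lt_div_iff₀ (by positivity)] at h1
    nlinarith
  have htR : ∀ p, p ≤ k → |t| < R p := by
    intro p hp
    calc |t| < min (1 / (2*C)) ((Finset.range (k+1)).inf' hne R) := ht
      _ ≤ (Finset.range (k+1)).inf' hne R := min_le_right _ _
      _ ≤ R p := Finset.inf'_le R (Finset.mem_range.2 (by omega))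
  have hS : 0 < 1 + lam * t := (hR 0).1 t (htR 0 (Nat.zero_le k))
  -- summability of the indicator series
  have hgeo : Summable (fun N : ℕ => C * (1/2:ℝ)^N) :=
    (summable_geometric_of_lt_one (by norm_num) (by norm_num)).mul_left C
  have hTb : ∀ j, j ≤ k → ∀ N : ℕ,
      |(if j ≤ N then W N j else 0) * t^N / N.factorial| ≤ C * (1/2)^N := by
    intro j hj N
    rcases le_or_gt j N with h | h
    · rw [if_pos h, abs_div, abs_mul, abs_pow]
      have h1 : |W N j| ≤ C^(N+1) * N.factorial := hCb j hj N h
      have hNf : (0:ℝ) < N.factorial := by positivity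
      rw [abs_of_pos hNf, div_le_iff₀ hNf]
      calc |W N j| * |t|^N ≤ (C^(N+1) * N.factorial) * |t|^N := by
            apply mul_le_mul_of_nonneg_right h1 (by positivity)
        _ = (C * N.factorial) * (C^N * |t|^N) := by ring
        _ = (C * N.factorial) * (C*|t|)^N := by rw [mul_pow]
        _ ≤ (C * N.factorial) * (1/2)^N := by
            apply mul_le_mul_of_nonneg_left _ (mul_nonneg hC0.le hNf.le)
            exact pow_le_pow_left₀ (mul_nonneg hC0.le (abs_nonneg t)) htC N
        _ = C * (1/2)^N * N.factorial := by ring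
    · rw [if_neg (by omega)]
      simp only [zero_mul, zero_div, abs_zero]
      positivity
  have hTsum : ∀ j, j ≤ k → Summable (fun N => (if j ≤ N then W N j else 0) * t^N / N.factorial) :=
    fun j hj => Summable.of_norm_bounded hgeo
      (fun N => by rw [Real.norm_eq_abs]; exact hTb j hj N)
  have hBf : ∀ j, j ≤ k → (∑' N, (if j ≤ N then W N j else 0) * t^N / N.factorial)
      = ∑' n, W (j+n) j * t^(j+n) / (j+n).factorial := by
    intro j hj
    rw [← (hTsum j hj).sum_add_tsum_nat_add j]
    have h1 : ∑ i ∈ Finset.range j, (if j ≤ i then W i j else 0) * t^i / i.factorial = 0 := by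
      apply Finset.sum_eq_zero
      intro i hi
      rw [Finset.mem_range] at hi
      rw [if_neg (by omega), zero_mul, zero_div]
    rw [h1, zero_add]
    apply tsum_congr
    intro n
    rw [if_pos (Nat.le_add_left j n), Nat.add_comm n j]
  set v : ℝ := ((1 + lam * t) ^ ((m:ℝ)/lam) - 1) / m with hv
  have h1mv : 1 + (m:ℝ) * v = (1 + lam * t) ^ ((m:ℝ)/lam) := by
    rw [hv]
    field_simp
    ring
  have hkey : ∀ p, p ≤ k →
      ∑ j ∈ Finset.range (p+1), ffall (p:ℝ) j * (m:ℝ)^j *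
        ((1 + lam * t) ^ ((1:ℝ)/lam) * (v ^ j / j.factorial))
      = ∑ j ∈ Finset.range (p+1), ffall (p:ℝ) j * (m:ℝ)^j *
        (∑' n, W (j+n) j * t^(j+n) / (j+n).factorial) := by
    intro p hp
    have hStep : (1 + lam * t) ^ (((m*p+1:ℕ):ℝ) / lam)
        = ∑ j ∈ Finset.range (p+1), ffall (p:ℝ) j * (m:ℝ)^j *
            ((1 + lam * t) ^ ((1:ℝ)/lam) * (v ^ j / j.factorial)) := by
      have ha : ((1+lam*t) ^ ((m:ℝ)/lam)) ^ p = (1+lam*t) ^ (((m:ℝ)/lam) * p) := by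
        rw [← Real.rpow_natCast ((1+lam*t) ^ ((m:ℝ)/lam)) p, ← Real.rpow_mul hS.le]
      have e1 : (1 + lam * t) ^ (((m*p+1:ℕ):ℝ) / lam)
          = (1 + lam * t) ^ ((1:ℝ)/lam) * (1 + (m:ℝ)*v) ^ p := by
        rw [h1mv, ha, ← Real.rpow_add hS]
        congr 1
        push_cast
        field_simp
        ring
      rw [e1, one_add_pow ((m:ℝ)*v) p, Finset.mul_sum]
      apply Finset.sum_congr rfl
      intro j _
      rw [mul_pow]
      ring
    rw [← hStep]
    rw [← ((hR p).2 t (htR p hp)).tsum_eq]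
    have hterm : ∀ N : ℕ, dfall lam ((m*p+1:ℕ):ℝ) N / N.factorial * t ^ N
        = ∑ j ∈ Finset.range (p+1), ffall (p:ℝ) j * (m:ℝ)^j *
            ((if j ≤ N then W N j else 0) * t^N / N.factorial) := by
      intro N
      rw [hWtrunc m lam W hW p N, Finset.sum_div, Finset.sum_mul]
      apply Finset.sum_congr rfl
      intro j _
      ring
    rw [tsum_congr hterm]
    rw [Summable.tsum_finsetSum (fun j hj => ?_)]
    · apply Finset.sum_congr rfl
      intro j hj
      rw [Finset.mem_range] at hj
      rw [tsum_mul_left, hBf j (by omega)]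
    · rw [Finset.mem_range] at hj
      exact (hTsum j (by omega)).mul_left _
  have ext : ∀ p, p ≤ k → (1 + lam * t) ^ ((1:ℝ)/lam) * (v ^ p / p.factorial)
      = ∑' n, W (p+n) p * t^(p+n) / (p+n).factorial := by
    intro p
    induction p using Nat.strong_induction_on with
    | _ p ih =>
      intro hp
      have hk2 := hkey p hp
      rw [Finset.sum_range_succ, Finset.sum_range_succ] at hk2
      have hsame : ∑ j ∈ Finset.range p, ffall (p:ℝ) j * (m:ℝ)^j *
            ((1+lam*t) ^ ((1:ℝ)/lam) * (v^j/j.factorial))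
          = ∑ j ∈ Finset.range p, ffall (p:ℝ) j * (m:ℝ)^j *
            (∑' n, W (j+n) j * t^(j+n)/(j+n).factorial) := by
        apply Finset.sum_congr rfl
        intro j hj
        rw [Finset.mem_range] at hj
        rw [ih j hj (by omega)]
      rw [hsame] at hk2
      have h2 : ffall (p:ℝ) p * (m:ℝ)^p * ((1+lam*t) ^ ((1:ℝ)/lam) * (v^p/p.factorial))
          = ffall (p:ℝ) p * (m:ℝ)^p * (∑' n, W (p+n) p * t^(p+n)/(p+n).factorial) := by
        linarith
      have h3 : ffall (p:ℝ) p * (m:ℝ)^p ≠ 0 := by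
        rw [ffall_nat_self]
        apply mul_ne_zero
        · exact_mod_cast (Nat.factorial_pos p).ne'
        · exact pow_ne_zero _ hm'
      exact mul_left_cancel₀ h3 h2
  have hfin := ext k le_rfl
  calc (1 + lam*t) ^ ((1:ℝ)/lam) * (1/(k.factorial:ℝ) * v ^ k)
      = (1 + lam*t) ^ ((1:ℝ)/lam) * (v ^ k / k.factorial) := by ring
    _ = _ := hfin
end
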